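/- For every real number ω one has A₊(ω) ≠ 0, and A₋(ω) is the complex conjugate of A₊(ω); in particular |A₋(ω)| = |A₊(ω)| and the quotient -A₋(ω)/A₊(ω) lies on the unit circle. -/

import Mathlib

open Complex Real

noncomputable section


lemma hasDerivAt_conj_conj {f : ℂ → ℂ} {f' : ℂ} {z : ℂ}
    (hf : HasDerivAt f f' ((starRingEnd ℂ) z)) :
    HasDerivAt (fun w => (starRingEnd ℂ) (f ((starRingEnd ℂ) w))) ((starRingEnd ℂ) f') z := by
  rw [hasDerivAt_iff_tendsto] at hf ⊢
  have hc : Filter.Tendsto (fun w : ℂ => (starRingEnd ℂ) w) (nhds z)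
      (nhds ((starRingEnd ℂ) z)) := (Complex.continuous_conj.tendsto z)
  have h := hf.comp hc
  convert h using 1
  funext w
  simp only [Function.comp, smul_eq_mul]
  have e1 : (starRingEnd ℂ) w - (starRingEnd ℂ) z = (starRingEnd ℂ) (w - z) := (map_sub _ _ _).symm
  have e2 : f ((starRingEnd ℂ) w) - f ((starRingEnd ℂ) z) - ((starRingEnd ℂ) (w - z)) * f'
      = (starRingEnd ℂ) ((starRingEnd ℂ) (f ((starRingEnd ℂ) w))
        - (starRingEnd ℂ) (f ((starRingEnd ℂ) z)) - (w - z) * (starRingEnd ℂ) f') := by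
    simp only [map_sub, map_mul, Complex.conj_conj]
  rw [e1, e2, Complex.norm_conj, Complex.norm_conj]

lemma airy_schwarz {Ai : ℂ → ℂ} (hent : Differentiable ℂ Ai)
    (hreal : ∀ x : ℝ, (Ai (x : ℂ)).im = 0) (z : ℂ) :
    Ai ((starRingEnd ℂ) z) = (starRingEnd ℂ) (Ai z) := by
  set g : ℂ → ℂ := fun w => (starRingEnd ℂ) (Ai ((starRingEnd ℂ) w)) with hg
  have hgd : Differentiable ℂ g := fun w =>
    (hasDerivAt_conj_conj ((hent _).hasDerivAt)).differentiableAt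
  have hAa : AnalyticOnNhd ℂ Ai Set.univ := fun z _ => hent.analyticAt z
  have hga : AnalyticOnNhd ℂ g Set.univ := fun z _ => hgd.analyticAt z
  have key : ∀ x : ℝ, Ai (x : ℂ) = g (x : ℂ) := by
    intro x
    have h2 : (starRingEnd ℂ) (Ai (x : ℂ)) = Ai (x : ℂ) :=
      Complex.conj_eq_iff_im.mpr (hreal x)
    simp only [hg, Complex.conj_ofReal, h2]
  have hfreq : ∃ᶠ w in nhdsWithin 0 {0}ᶜ, Ai w = g w := by
    have ht0 : Filter.Tendsto (fun n : ℕ => ((((n : ℝ) + 1)⁻¹ : ℝ) : ℂ)) Filter.atTop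
        (nhdsWithin 0 {0}ᶜ) := by
      apply tendsto_nhdsWithin_of_tendsto_nhds_of_eventually_within
      · have : Filter.Tendsto (fun n : ℕ => ((n : ℝ) + 1)⁻¹) Filter.atTop (nhds 0) :=
          tendsto_one_div_add_atTop_nhds_zero_nat.congr (by intro n; rw [one_div])
        have h2 := (Complex.continuous_ofReal.tendsto 0).comp this
        rw [Complex.ofReal_zero] at h2
        refine h2.congr fun n => ?_
        simp only [Function.comp]
        try push_cast
        try ring
      · filter_upwards with n
        simp only [Set.mem_compl_iff, Set.mem_singleton_iff, Complex.ofReal_eq_zero]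
        positivity
    exact ht0.frequently (Filter.Eventually.frequently
      (Filter.Eventually.of_forall fun n => key _))
  have heq : Ai = g := hAa.eq_of_frequently_eq hga hfreq
  have h3 := congrFun heq ((starRingEnd ℂ) z)
  rw [h3]
  simp only [hg, Complex.conj_conj]


/-- Defining properties of the Airy function `Ai : ℂ → ℂ`: it is the (unique) entire
solution of `w'' (z) = z · w(z)` with `Ai 0 = 3^{-2/3}/Γ(2/3)`,
`Ai' 0 = -3^{-1/3}/Γ(1/3)`, and `Ai` is real-valued on `ℝ`. -/
structure IsAiry (Ai : ℂ → ℂ) : Prop where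
  entire : Differentiable ℂ Ai
  ode : ∀ z : ℂ, iteratedDeriv 2 Ai z = z * Ai z
  init0 : Ai 0 = (3 : ℂ) ^ (-(2 : ℂ) / 3) / Complex.Gamma (2 / 3)
  init1 : deriv Ai 0 = -((3 : ℂ) ^ (-(1 : ℂ) / 3)) / Complex.Gamma (1 / 3)
  realOnReal : ∀ x : ℝ, (Ai (x : ℂ)).im = 0

/-- `A₊(z) = e^{-iπ/3} · Ai(e^{-iπ/3} z)`. -/
def Aplus (Ai : ℂ → ℂ) (z : ℂ) : ℂ :=
  Complex.exp (-((Real.pi : ℂ) / 3) * Complex.I) *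
    Ai (Complex.exp (-((Real.pi : ℂ) / 3) * Complex.I) * z)

/-- `A₋(z) = e^{iπ/3} · Ai(e^{iπ/3} z)`. -/
def Aminus (Ai : ℂ → ℂ) (z : ℂ) : ℂ :=
  Complex.exp (((Real.pi : ℂ) / 3) * Complex.I) *
    Ai (Complex.exp (((Real.pi : ℂ) / 3) * Complex.I) * z)

/-- For every real `ω`: `A₊(ω) ≠ 0`, `A₋(ω)` is the complex conjugate of `A₊(ω)`;
in particular `|A₋(ω)| = |A₊(ω)|` and `-A₋(ω)/A₊(ω)` lies on the unit circle. -/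
theorem Aplus_ne_zero_and_Aminus_conj (Ai : ℂ → ℂ) (hAi : IsAiry Ai) (ω : ℝ) :
    Aplus Ai (ω : ℂ) ≠ 0 ∧
    Aminus Ai (ω : ℂ) = starRingEnd ℂ (Aplus Ai (ω : ℂ)) ∧
    ‖Aminus Ai (ω : ℂ)‖ = ‖Aplus Ai (ω : ℂ)‖ ∧
    ‖-(Aminus Ai (ω : ℂ)) / Aplus Ai (ω : ℂ)‖ = 1 := by
  set c := Complex.exp (-((Real.pi : ℂ) / 3) * Complex.I) with hc
  set d := Complex.exp (((Real.pi : ℂ) / 3) * Complex.I) with hd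
  have hcconj : (starRingEnd ℂ) c = d := by
    rw [hc, hd, ← Complex.exp_conj]
    congr 1
    simp [map_mul, map_neg, map_div₀, Complex.conj_ofReal, Complex.conj_I, map_ofNat]
  -- conjugation identity
  have hconj : Aminus Ai (ω : ℂ) = starRingEnd ℂ (Aplus Ai (ω : ℂ)) := by
    unfold Aplus Aminus
    rw [map_mul, hcconj, ← airy_schwarz hAi.entire hAi.realOnReal, map_mul, hcconj,
      Complex.conj_ofReal]
  -- algebraic facts
  have hcd : c * d = 1 := by
    rw [hc, hd, ← Complex.exp_add, show -((Real.pi : ℂ) / 3) * Complex.I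
      + ((Real.pi : ℂ) / 3) * Complex.I = 0 by ring, Complex.exp_zero]
  have hc3 : c ^ 3 = -1 := by
    have h1 : c ^ 3 = Complex.exp ((3 : ℕ) * (-((Real.pi : ℂ) / 3) * Complex.I)) := by
      rw [hc, ← Complex.exp_nat_mul]
    rw [h1, show ((3 : ℕ) : ℂ) * (-((Real.pi : ℂ) / 3) * Complex.I)
      = -((Real.pi : ℂ) * Complex.I) by push_cast; ring, Complex.exp_neg,
      Complex.exp_pi_mul_I]
    norm_num
  have hd3 : d ^ 3 = -1 := by
    have h1 : d ^ 3 = Complex.exp ((3 : ℕ) * (((Real.pi : ℂ) / 3) * Complex.I)) := by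
      rw [hd, ← Complex.exp_nat_mul]
    rw [h1, show ((3 : ℕ) : ℂ) * (((Real.pi : ℂ) / 3) * Complex.I)
      = (Real.pi : ℂ) * Complex.I by push_cast; ring, Complex.exp_pi_mul_I]
  -- derivative facts
  have hAd : ∀ w : ℂ, HasDerivAt Ai (deriv Ai w) w := fun w => (hAi.entire w).hasDerivAt
  have hDa : AnalyticOnNhd ℂ (deriv Ai) Set.univ :=
    (analyticOnNhd_univ_iff_differentiable.mpr hAi.entire).deriv
  have hD : Differentiable ℂ (deriv Ai) := analyticOnNhd_univ_iff_differentiable.mp hDa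
  have hode2 : ∀ w : ℂ, deriv (deriv Ai) w = w * Ai w := by
    intro w
    have h := hAi.ode w
    rwa [iteratedDeriv_succ, iteratedDeriv_one] at h
  have hAd2 : ∀ w : ℂ, HasDerivAt (deriv Ai) (w * Ai w) w := fun w => by
    simpa [hode2 w] using (hD w).hasDerivAt
  -- the Wronskian-type function
  set W : ℂ → ℂ := fun z => (c * Ai (c * z)) * (d ^ 2 * deriv Ai (d * z))
    - (c ^ 2 * deriv Ai (c * z)) * (d * Ai (d * z)) with hW
  have hWd : ∀ z : ℂ, HasDerivAt W 0 z := by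
    intro z
    have hid : ∀ e : ℂ, HasDerivAt (fun z : ℂ => e * z) e z := fun e => by
      simpa using (hasDerivAt_id z).const_mul e
    have h1 : HasDerivAt (fun z => Ai (c * z)) (deriv Ai (c * z) * c) z :=
      (hAd (c * z)).comp z (hid c)
    have h2 : HasDerivAt (fun z => deriv Ai (c * z)) ((c * z) * Ai (c * z) * c) z :=
      (hAd2 (c * z)).comp z (hid c)
    have h3 : HasDerivAt (fun z => Ai (d * z)) (deriv Ai (d * z) * d) z :=
      (hAd (d * z)).comp z (hid d)
    have h4 : HasDerivAt (fun z => deriv Ai (d * z)) ((d * z) * Ai (d * z) * d) z :=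
      (hAd2 (d * z)).comp z (hid d)
    have hp : HasDerivAt W
        ((c * (deriv Ai (c * z) * c)) * (d ^ 2 * deriv Ai (d * z))
          + (c * Ai (c * z)) * (d ^ 2 * ((d * z) * Ai (d * z) * d))
          - ((c ^ 2 * ((c * z) * Ai (c * z) * c)) * (d * Ai (d * z))
            + (c ^ 2 * deriv Ai (c * z)) * (d * (deriv Ai (d * z) * d)))) z :=
      ((h1.const_mul c).mul (h4.const_mul (d ^ 2))).sub
        ((h2.const_mul (c ^ 2)).mul (h3.const_mul d))
    convert hp using 1
    linear_combination (-(c * d * z * Ai (c * z) * Ai (d * z))) * hd3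
      + (c * d * z * Ai (c * z) * Ai (d * z)) * hc3
  have hWconst : W (ω : ℂ) = W 0 :=
    is_const_of_deriv_eq_zero (fun z => (hWd z).differentiableAt)
      (fun z => (hWd z).deriv) _ _
  -- value at 0
  have hA0 : Ai 0 ≠ 0 := by
    rw [hAi.init0]
    apply div_ne_zero
    · rw [Complex.cpow_def_of_ne_zero (by norm_num)]
      exact Complex.exp_ne_zero _
    · apply Complex.Gamma_ne_zero
      intro m h
      have := congrArg Complex.re h
      simp at this
      have hm : (0 : ℝ) ≤ m := Nat.cast_nonneg m
      norm_num at this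
      linarith
  have hA1 : deriv Ai 0 ≠ 0 := by
    rw [hAi.init1]
    apply div_ne_zero
    · apply neg_ne_zero.mpr
      rw [Complex.cpow_def_of_ne_zero (by norm_num)]
      exact Complex.exp_ne_zero _
    · apply Complex.Gamma_ne_zero
      intro m h
      have := congrArg Complex.re h
      simp at this
      have hm : (0 : ℝ) ≤ m := Nat.cast_nonneg m
      norm_num at this
      linarith
  have hdc : d - c ≠ 0 := by
    have hsin : d - c = 2 * Complex.sin ((Real.pi : ℂ) / 3) * Complex.I := by
      rw [hd, hc, show -((Real.pi : ℂ) / 3) * Complex.I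
        = (-((Real.pi : ℂ) / 3)) * Complex.I by ring,
        Complex.exp_mul_I, Complex.exp_mul_I, Complex.cos_neg, Complex.sin_neg]
      ring
    rw [hsin, show ((Real.pi : ℂ) / 3) = ((Real.pi / 3 : ℝ) : ℂ) by push_cast; ring,
      ← Complex.ofReal_sin]
    apply mul_ne_zero (mul_ne_zero two_ne_zero _) Complex.I_ne_zero
    rw [Complex.ofReal_ne_zero, Real.sin_pi_div_three]
    positivity
  have hW0 : W 0 ≠ 0 := by
    have : W 0 = Ai 0 * deriv Ai 0 * (c * d) * (d - c) := by
      rw [hW]; simp only [mul_zero]; ring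
    rw [this, hcd]
    simp only [mul_one]
    exact mul_ne_zero (mul_ne_zero hA0 hA1) hdc
  -- nonvanishing
  have hne : Aplus Ai (ω : ℂ) ≠ 0 := by
    intro h0
    have hm0 : Aminus Ai (ω : ℂ) = 0 := by rw [hconj, h0, map_zero]
    have hp0 : c * Ai (c * (ω : ℂ)) = 0 := h0
    have hm0' : d * Ai (d * (ω : ℂ)) = 0 := hm0
    have : W (ω : ℂ) = 0 := by
      rw [hW]
      simp only
      rw [mul_comm (c ^ 2 * deriv Ai (c * (ω : ℂ)))]
      rw [show (c * Ai (c * (ω : ℂ))) * (d ^ 2 * deriv Ai (d * (ω : ℂ)))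
        = (c * Ai (c * (ω : ℂ))) * (d ^ 2 * deriv Ai (d * (ω : ℂ))) from rfl]
      rw [hp0, hm0']
      ring
    rw [hWconst] at this
    exact hW0 this
  refine ⟨hne, hconj, ?_, ?_⟩
  · rw [hconj, Complex.norm_conj]
  · rw [norm_div, norm_neg, hconj, Complex.norm_conj, div_self]
    exact (norm_ne_zero_iff.mpr hne)

end
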